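/- Let u = 3+2√2 and Δ_n = N_{ℚ(√2)/ℚ}(u^n - 1). Then Δ_1 = -4, Δ_2 = -32, Δ_3 = -196, Δ_4 = -1152, Δ_5 = -6724, Δ_6 = -39200, and every term Δ_n with n ≥ 3 has a primitive prime divisor (a prime dividing Δ_n but no earlier nonzero term). -/

import Mathlib

open Polynomial Finset

namespace LP

def u : ℤ√2 := ⟨3, 2⟩

lemma u_mul_star : u * star u = 1 := by decide

lemma norm_dvd {a b : ℤ√2} (h : a ∣ b) : a.norm ∣ b.norm := by
  obtain ⟨c, rfl⟩ := h
  rw [Zsqrtd.norm_mul]; exact dvd_mul_right _ _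

lemma dvd_of_dvd_sq {p : ℕ} (hp : p.Prime) (hp2 : p ≠ 2) {z : ℤ√2}
    (h : ((p : ℤ) : ℤ√2) ∣ z * z) : ((p : ℤ) : ℤ√2) ∣ z := by
  have hpZ : Prime (p : ℤ) := Nat.prime_iff_prime_int.mp hp
  rw [Zsqrtd.intCast_dvd] at h ⊢
  obtain ⟨hre, him⟩ := h
  simp only [Zsqrtd.re_mul, Zsqrtd.im_mul] at hre him
  have hp2' : ¬ ((p:ℤ) ∣ 2) := by
    intro h2
    have h3 := Int.le_of_dvd (by norm_num) h2
    have h4 : p = 2 := by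
      have := hp.two_le
      omega
    exact hp2 h4
  have him' : (p:ℤ) ∣ 2 * (z.re * z.im) := by
    convert him using 1; ring
  have : (p:ℤ) ∣ z.re * z.im := (hpZ.dvd_or_dvd him').resolve_left hp2'
  rcases hpZ.dvd_or_dvd this with h1 | h1
  · refine ⟨h1, ?_⟩
    have h2 : (p:ℤ) ∣ 2 * (z.im * z.im) := by
      have := dvd_sub hre (Dvd.dvd.mul_right h1 z.re)
      convert this using 1
      · rfl
      · ring
    have := (hpZ.dvd_or_dvd h2).resolve_left hp2'
    exact (hpZ.dvd_or_dvd this).elim id id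
  · have h2 : (p:ℤ) ∣ z.re * z.re := by
      have := dvd_sub hre (Dvd.dvd.mul_left (h1.mul_left 2) z.im)
      convert this using 1
      · rfl
      · ring
    exact ⟨(hpZ.dvd_or_dvd h2).elim id id, h1⟩

abbrev Qr (p : ℕ) : Type := ℤ√2 ⧸ (Ideal.span {((p:ℤ) : ℤ√2)})

def mkq (p : ℕ) : ℤ√2 →+* Qr p := Ideal.Quotient.mk _

lemma mkq_surj (p : ℕ) : Function.Surjective (mkq p) := Ideal.Quotient.mk_surjective

lemma mkq_eq_zero_iff {p : ℕ} {z : ℤ√2} : mkq p z = 0 ↔ ((p:ℤ) : ℤ√2) ∣ z := by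
  rw [mkq, Ideal.Quotient.eq_zero_iff_mem, Ideal.mem_span_singleton]

lemma mkq_eq_iff {p : ℕ} {z w : ℤ√2} : mkq p z = mkq p w ↔ ((p:ℤ) : ℤ√2) ∣ z - w := by
  rw [← sub_eq_zero, ← map_sub, mkq_eq_zero_iff]

lemma finite_Qr (p : ℕ) (hp : 0 < p) : Finite (Qr p) := by
  have hpz : (p : ℤ) ≠ 0 := by exact_mod_cast hp.ne'
  have hppos : (0:ℤ) < p := by exact_mod_cast hp
  have hsurj : Function.Surjective (fun ij : Fin p × Fin p => mkq p ⟨(ij.1 : ℤ), (ij.2 : ℤ)⟩) := by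
    intro x
    obtain ⟨z, rfl⟩ := mkq_surj p x
    have h1 := Int.emod_nonneg z.re hpz
    have h2 := Int.emod_lt_of_pos z.re hppos
    have h3 := Int.emod_nonneg z.im hpz
    have h4 := Int.emod_lt_of_pos z.im hppos
    refine ⟨(⟨(z.re % p).toNat, by omega⟩, ⟨(z.im % p).toNat, by omega⟩), ?_⟩
    simp only
    rw [mkq_eq_iff, Zsqrtd.intCast_dvd]
    constructor
    · simp only [Zsqrtd.re_sub]
      refine ⟨-(z.re / p), ?_⟩
      rw [Int.toNat_of_nonneg h1, Int.emod_def]; ring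
    · simp only [Zsqrtd.im_sub]
      refine ⟨-(z.im / p), ?_⟩
      rw [Int.toNat_of_nonneg h3, Int.emod_def]; ring
  exact Finite.of_surjective _ hsurj

def Up (p : ℕ) : (Qr p)ˣ where
  val := mkq p u
  inv := mkq p (star u)
  val_inv := by rw [← map_mul, u_mul_star, map_one]
  inv_val := by rw [← map_mul, mul_comm, u_mul_star, map_one]

lemma sq_eq_zero {p : ℕ} (hp : p.Prime) (hp2 : p ≠ 2) {x : Qr p} (h : x * x = 0) : x = 0 := by
  obtain ⟨z, rfl⟩ := mkq_surj p x
  rw [← map_mul, mkq_eq_zero_iff] at h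
  rw [mkq_eq_zero_iff]
  exact dvd_of_dvd_sq hp hp2 h

lemma key_iff {p : ℕ} (hp : p.Prime) (hp2 : p ≠ 2) (m : ℕ) :
    (p : ℤ) ∣ Zsqrtd.norm (u ^ m - 1) ↔ Up p ^ m = 1 := by
  constructor
  · intro h
    have h1 : ((p:ℤ) : ℤ√2) ∣ ((Zsqrtd.norm (u ^ m - 1) : ℤ) : ℤ√2) :=
      (Zsqrtd.intCast_dvd_intCast _ _).mpr h
    rw [Zsqrtd.norm_eq_mul_conj] at h1
    -- pass to quotient
    have h2 : mkq p (u ^ m - 1) * mkq p (star (u ^ m - 1)) = 0 := by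
      rw [← map_mul, mkq_eq_zero_iff]; exact h1
    set a : Qr p := mkq p (u ^ m) with ha
    set b : Qr p := mkq p (star u ^ m) with hb
    have hab : a * b = 1 := by
      rw [ha, hb, ← map_mul, ← mul_pow, u_mul_star, one_pow, map_one]
    have h3 : (a - 1) * (b - 1) = 0 := by
      have : mkq p (star (u ^ m - 1)) = b - 1 := by
        rw [star_sub, star_pow, star_one, map_sub, map_one]
      rw [← this, ← h2]
      congr 1
    have h4 : (a - 1) * (a - 1) = 0 := by
      linear_combination (a - 1) * hab + (-a) * h3
    have h5 : a = 1 := by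
      have := sq_eq_zero hp hp2 h4
      rwa [sub_eq_zero] at this
    have h6 : (mkq p u) ^ m = 1 := by rw [← map_pow]; exact h5
    apply Units.ext
    rw [Units.val_pow_eq_pow_val, Units.val_one]
    exact h6
  · intro h
    have h1 : mkq p (u ^ m - 1) = 0 := by
      have : (Up p ^ m).val = (1 : Qr p) := by rw [h]; rfl
      rw [Units.val_pow_eq_pow_val] at this
      rw [map_sub, map_one, map_pow]
      exact sub_eq_zero.mpr this
    rw [mkq_eq_zero_iff] at h1
    obtain ⟨t, ht⟩ := h1
    have : Zsqrtd.norm (u ^ m - 1) = (p * p) * Zsqrtd.norm t := by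
      rw [ht, Zsqrtd.norm_mul, Zsqrtd.norm_intCast]
    rw [this]
    exact ⟨p * Zsqrtd.norm t, by ring⟩

noncomputable def e (n : ℕ) : ℤ := Zsqrtd.norm ((cyclotomic n (ℤ√2)).eval u)

lemma e_dvd_delta (n : ℕ) (hn : 0 < n) : e n ∣ Zsqrtd.norm (u ^ n - 1) := by
  apply norm_dvd
  have h1 : cyclotomic n (ℤ√2) ∣ X ^ n - 1 := cyclotomic.dvd_X_pow_sub_one n _
  have h2 := eval_dvd (x := u) h1
  simpa using h2

-- Φ_n ∣ geometric sum over ℤ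

lemma cyclotomic_dvd_geom (n q : ℕ) (hq : 1 < q) (hqn : q ∣ n) (hn : 0 < n) :
    cyclotomic n ℤ ∣ ∑ i ∈ range q, ((X : ℤ[X]) ^ (n / q)) ^ i := by
  have hd : n / q ∈ n.properDivisors := by
    rw [Nat.mem_properDivisors]
    exact ⟨Nat.div_dvd_of_dvd hqn, Nat.div_lt_self hn hq⟩
  have key := X_pow_sub_one_mul_cyclotomic_dvd_X_pow_sub_one_of_dvd ℤ hd
  have hgeom : (∑ i ∈ range q, ((X : ℤ[X]) ^ (n / q)) ^ i) * ((X:ℤ[X]) ^ (n/q) - 1)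
      = X ^ n - 1 := by
    rw [geom_sum_mul, ← pow_mul, Nat.div_mul_cancel hqn]
  have hne : ((X:ℤ[X]) ^ (n/q) - 1) ≠ 0 := by
    have : (0:ℕ) < n / q := Nat.div_pos (Nat.le_of_dvd hn hqn) (by omega)
    simpa using X_pow_sub_C_ne_zero this (1:ℤ)
  rw [← hgeom] at key
  have key2 : ((X:ℤ[X]) ^ (n/q) - 1) * cyclotomic n ℤ ∣
      ((X:ℤ[X]) ^ (n/q) - 1) * ∑ i ∈ range q, ((X : ℤ[X]) ^ (n / q)) ^ i := by
    exact key.trans (dvd_of_eq (mul_comm _ _))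
  exact (mul_dvd_mul_iff_left hne).mp key2

lemma e_dvd_norm_geom (n q : ℕ) (hq : 1 < q) (hqn : q ∣ n) (hn : 0 < n) :
    e n ∣ Zsqrtd.norm (∑ i ∈ range q, (u ^ (n / q)) ^ i) := by
  apply norm_dvd
  have h := cyclotomic_dvd_geom n q hq hqn hn
  have h2 := Polynomial.map_dvd (Int.castRingHom (ℤ√2)) h
  rw [map_cyclotomic] at h2
  have h3 := eval_dvd (x := u) h2
  refine h3.trans (dvd_of_eq ?_)
  rw [eval_map, eval₂_finset_sum]
  simp [eval₂_pow]

-- binomial expansion helpers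

lemma pow_one_add {R : Type*} [CommRing R] (x : R) (i : ℕ) :
    ∃ C : R, (1 + x) ^ i = 1 + (i : R) * x + x ^ 2 * C := by
  induction i with
  | zero => exact ⟨0, by simp⟩
  | succ k ih =>
    obtain ⟨C, hC⟩ := ih
    refine ⟨C + x*C + (k:R), ?_⟩
    rw [pow_succ, hC]
    push_cast
    ring

lemma geom_one_add {R : Type*} [CommRing R] (x : R) (q : ℕ) :
    ∃ B : R, ∑ i ∈ range q, (1 + x) ^ i
      = (q : R) + ((∑ i ∈ range q, (i:ℕ)) : ℕ) * x + x ^ 2 * B := by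
  induction q with
  | zero => exact ⟨0, by simp⟩
  | succ k ih =>
    obtain ⟨B, hB⟩ := ih
    obtain ⟨C, hC⟩ := pow_one_add x k
    refine ⟨B + C, ?_⟩
    rw [sum_range_succ, hB, hC, sum_range_succ]
    push_cast
    ring

lemma sum_range_half (p : ℕ) (hp : Odd p) :
    (∑ i ∈ range p, (i:ℕ)) = p * ((p-1)/2) := by
  obtain ⟨h, hh⟩ := hp
  have h2 : (∑ i ∈ range p, (i:ℕ)) * 2 = p * (p - 1) := Finset.sum_range_id_mul_two p
  have h3 : (p - 1) / 2 = h := by omega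
  rw [h3]
  have h4 : p * (p-1) = (p * h) * 2 := by
    rw [show p - 1 = 2*h from by omega]; ring
  omega

noncomputable def f : ℤ√2 →+* ℝ := Zsqrtd.lift ⟨Real.sqrt 2, by
  have : Real.sqrt 2 * Real.sqrt 2 = 2 := Real.mul_self_sqrt (by norm_num)
  rw [this]; norm_num⟩

noncomputable def U : ℝ := 3 + 2 * Real.sqrt 2

noncomputable def V : ℝ := 3 - 2 * Real.sqrt 2

lemma sqrt2_sq : Real.sqrt 2 * Real.sqrt 2 = 2 := Real.mul_self_sqrt (by norm_num)

lemma sqrt2_lt : (1:ℝ) < Real.sqrt 2 := by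
  nlinarith [sqrt2_sq, Real.sqrt_nonneg 2]

lemma sqrt2_lt' : Real.sqrt 2 < 3/2 := by
  nlinarith [sqrt2_sq, Real.sqrt_nonneg 2]

lemma hU1 : 1 < U := by unfold U; nlinarith [sqrt2_lt]

lemma hV0 : 0 < V := by unfold V; nlinarith [sqrt2_lt']

lemma hV1 : V < 1 := by unfold V; nlinarith [sqrt2_lt]

lemma hUV : U * V = 1 := by unfold U V; nlinarith [sqrt2_sq]

lemma f_u : f u = U := by
  show (↑(3:ℤ) + ↑(2:ℤ) * Real.sqrt 2 : ℝ) = U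
  unfold U; push_cast; ring

lemma f_star_u : f (star u) = V := by
  show (↑(3:ℤ) + ↑(-2:ℤ) * Real.sqrt 2 : ℝ) = V
  unfold V; push_cast; ring

lemma pal : ∀ n : ℕ, 2 ≤ n →
    (cyclotomic n ℝ).eval V = V ^ n.totient * (cyclotomic n ℝ).eval U := by
  intro n
  induction n using Nat.strong_induction_on with
  | _ n ih =>
  intro hn
  have hn0 : 0 < n := by omega
  have h1mem : 1 ∈ n.properDivisors := Nat.one_mem_properDivisors_iff_one_lt.mpr (by omega)
  set S := n.properDivisors.erase 1 with hS
  -- divisors surgery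
  have hins : insert n n.properDivisors = n.divisors := Nat.insert_self_properDivisors hn0.ne'
  have hnotmem : n ∉ n.properDivisors := Nat.self_notMem_properDivisors
  -- eval products
  have prodV : (cyclotomic n ℝ).eval V * ((V - 1) * ∏ d ∈ S, (cyclotomic d ℝ).eval V)
      = V ^ n - 1 := by
    have h := prod_cyclotomic_eq_X_pow_sub_one hn0 ℝ
    have h2 := congrArg (eval V) h
    rw [eval_prod, eval_sub, eval_pow, eval_X, eval_one] at h2
    rw [← h2, ← hins, prod_insert hnotmem, ← Finset.mul_prod_erase _ _ h1mem,
      cyclotomic_one, eval_sub, eval_X, eval_one]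
  have prodU : (cyclotomic n ℝ).eval U * ((U - 1) * ∏ d ∈ S, (cyclotomic d ℝ).eval U)
      = U ^ n - 1 := by
    have h := prod_cyclotomic_eq_X_pow_sub_one hn0 ℝ
    have h2 := congrArg (eval U) h
    rw [eval_prod, eval_sub, eval_pow, eval_X, eval_one] at h2
    rw [← h2, ← hins, prod_insert hnotmem, ← Finset.mul_prod_erase _ _ h1mem,
      cyclotomic_one, eval_sub, eval_X, eval_one]
  -- rewrite the S-product at V using ih
  have hSrw : ∏ d ∈ S, (cyclotomic d ℝ).eval V
      = V ^ (∑ d ∈ S, d.totient) * ∏ d ∈ S, (cyclotomic d ℝ).eval U := by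
    rw [← Finset.prod_pow_eq_pow_sum, ← Finset.prod_mul_distrib]
    apply Finset.prod_congr rfl
    intro d hd
    have hd1 : d ≠ 1 := (Finset.mem_erase.mp hd).1
    have hdp := (Finset.mem_erase.mp hd).2
    have hdlt : d < n := (Nat.mem_properDivisors.mp hdp).2
    have hdvd : d ∣ n := (Nat.mem_properDivisors.mp hdp).1
    have hdpos : 0 < d := Nat.pos_of_dvd_of_pos hdvd hn0
    exact ih d hdlt (by omega)
  set A := (cyclotomic n ℝ).eval U with hA
  set B := (cyclotomic n ℝ).eval V with hB
  set P := ∏ d ∈ S, (cyclotomic d ℝ).eval U with hP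
  set K := ∑ d ∈ S, d.totient with hK
  rw [hSrw] at prodV
  have hpow : V ^ n * U ^ n = 1 := by
    rw [← mul_pow, mul_comm V U, hUV, one_pow]
  have hV1U : V - 1 = -V * (U - 1) := by linear_combination hUV
  have hUn : (1:ℝ) < U ^ n := one_lt_pow₀ hU1 hn0.ne'
  have hne : (U - 1) * P ≠ 0 := by
    intro h0
    rw [h0, mul_zero] at prodU
    linarith
  have key : B * V ^ (K + 1) * ((U - 1) * P) = V ^ n * A * ((U - 1) * P) := by
    have e1 : B * V ^ (K + 1) * ((U - 1) * P)
        = -(B * ((V - 1) * (V ^ K * P))) := by rw [hV1U]; ring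
    have e2 : V ^ n * A * ((U - 1) * P) = V ^ n * (A * ((U - 1) * P)) := by ring
    rw [e1, prodV, e2, prodU]
    linear_combination -hpow
  have key2 : B * V ^ (K + 1) = V ^ n * A := mul_right_cancel₀ hne key
  have hsum : n = n.totient + (K + 1) := by
    have h := Nat.sum_totient n
    rw [← hins, sum_insert hnotmem, ← Finset.add_sum_erase _ _ h1mem,
      Nat.totient_one, ← hK] at h
    omega
  have key3 : B * V ^ (K + 1) = (V ^ n.totient * A) * V ^ (K + 1) := by
    rw [key2, show V ^ n = V ^ n.totient * V ^ (K + 1) from by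
      rw [← pow_add, ← hsum]]
    ring
  exact mul_right_cancel₀ (pow_ne_zero _ hV0.ne') key3

lemma e_real (n : ℕ) : ((e n : ℤ) : ℝ)
    = (cyclotomic n ℝ).eval U * (cyclotomic n ℝ).eval V := by
  have h1 : ((e n : ℤ) : ℝ) = f ((e n : ℤ) : ℤ√2) := (map_intCast f (e n)).symm
  rw [h1, e, Zsqrtd.norm_eq_mul_conj, map_mul]
  congr 1
  · rw [← f_u, cyclotomic.eval_apply]
  · have : f (star ((cyclotomic n (ℤ√2)).eval u))
        = (f.comp (starRingEnd (ℤ√2))) ((cyclotomic n (ℤ√2)).eval u) := rfl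
    rw [this, ← cyclotomic.eval_apply]
    congr 1
    · exact f_star_u ▸ rfl

lemma e_lower (n : ℕ) (hn : 2 ≤ n) : (4:ℝ) ^ n.totient < ((e n : ℤ) : ℝ) := by
  have hA := sub_one_pow_totient_lt_cyclotomic_eval hn hU1
  have hApos : (0:ℝ) < (U - 1) ^ n.totient := pow_pos (by linarith [hU1]) _
  have hVp : (0:ℝ) < V ^ n.totient := pow_pos hV0 _
  have h4 : ((U - 1) ^ 2 * V) = 4 := by
    unfold U V; nlinarith [sqrt2_sq]
  rw [e_real, pal n hn]
  calc (4:ℝ) ^ n.totient = ((U - 1) ^ 2 * V) ^ n.totient := by rw [h4]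
    _ = ((U - 1) ^ n.totient) ^ 2 * V ^ n.totient := by
        rw [mul_pow, ← pow_mul, ← pow_mul, Nat.mul_comm]
    _ < ((cyclotomic n ℝ).eval U) ^ 2 * V ^ n.totient := by
        apply mul_lt_mul_of_pos_right _ hVp
        nlinarith [hA, hApos]
    _ = (cyclotomic n ℝ).eval U * (V ^ n.totient * (cyclotomic n ℝ).eval U) := by ring

lemma odd_tot : ∀ n : ℕ, Odd n → 0 < n → n ≤ n.totient ^ 2 := by
  intro n
  induction n using Nat.recOnPosPrimePosCoprime with
  | prime_pow p k hp hk =>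
    intro hodd _
    have hp' : Nat.Prime p := hp
    have hpodd : p ≠ 2 := by
      rintro rfl
      have : Even (2^k) := (Nat.even_pow).mpr ⟨even_two, hk.ne'⟩
      exact (Nat.not_odd_iff_even.mpr this) hodd
    have hp3 : 3 ≤ p := by
      have := hp'.two_le
      omega
    rw [Nat.totient_prime_pow hp' hk]
    have h1 : p ≤ (p - 1)^2 := by
      obtain ⟨q, rfl⟩ : ∃ q, p = q + 3 := ⟨p - 3, by omega⟩
      have : q + 3 - 1 = q + 2 := by omega
      rw [this]
      nlinarith
    calc p ^ k ≤ p ^ (2*k - 2) * p := by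
          rw [← pow_succ]
          exact Nat.pow_le_pow_right (by omega) (by omega)
      _ ≤ p ^ (2*k-2) * (p-1)^2 := Nat.mul_le_mul_left _ h1
      _ = (p ^ (k - 1) * (p - 1)) ^ 2 := by
          rw [mul_pow, ← pow_mul]
          congr 2
          omega
  | zero => intro _ h; omega
  | one => intro _ _; simp
  | coprime a b ha hb hab iha ihb =>
    intro hodd hpos
    have hodda : Odd a := (Nat.Odd.of_mul_left hodd)
    have hoddb : Odd b := (Nat.Odd.of_mul_right hodd)
    rw [Nat.totient_mul hab, mul_pow]
    exact Nat.mul_le_mul (iha hodda (by omega)) (ihb hoddb (by omega))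

lemma tot_sq : ∀ n : ℕ, 0 < n → n ≤ 2 * n.totient ^ 2 := by
  intro n
  induction n using Nat.recOnPosPrimePosCoprime with
  | prime_pow p k hp hk =>
    intro _
    have hp' : Nat.Prime p := hp
    by_cases hp2 : p = 2
    · subst hp2
      rw [Nat.totient_prime_pow hp' hk]
      calc 2 ^ k ≤ 2 * (2 ^ (k-1)) ^ 2 := by
            rw [show 2 * (2^(k-1))^2 = 2^(2*k - 1) from by
              rw [← pow_mul]; rw [← pow_succ']; congr 1; omega]
            exact Nat.pow_le_pow_right (by omega) (by omega)
        _ = 2 * (2 ^ (k-1) * (2-1)) ^ 2 := by norm_num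
    · have : Odd (p ^ k) := by
        exact (hp'.odd_of_ne_two hp2).pow
      have h := odd_tot _ this (pow_pos hp'.pos k)
      omega
  | zero => intro h; omega
  | one => intro _; simp
  | coprime a b ha hb hab iha ihb =>
    intro hpos
    have hpa : 0 < a := by omega
    have hpb : 0 < b := by omega
    rw [Nat.totient_mul hab, mul_pow]
    -- at least one of a b is odd
    rcases Nat.even_or_odd a with hea | hoa
    · have hob : Odd b := by
        rcases Nat.even_or_odd b with heb | hob
        · exfalso
          have h2a : 2 ∣ a := hea.two_dvd
          have h2b : 2 ∣ b := heb.two_dvd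
          have := Nat.Coprime.eq_one_of_dvd (hab.coprime_dvd_left h2a) h2b
          omega
        · exact hob
      have h1 := iha hpa
      have h2 := odd_tot b hob hpb
      calc a * b ≤ (2 * a.totient ^2) * (b.totient ^2) := Nat.mul_le_mul h1 h2
        _ = 2 * (a.totient ^2 * b.totient^2) := by ring
    · have h1 := odd_tot a hoa hpa
      have h2 := ihb hpb
      calc a * b ≤ (a.totient ^2) * (2 * b.totient ^2) := Nat.mul_le_mul h1 h2
        _ = 2 * (a.totient ^2 * b.totient^2) := by ring

lemma pow_ge (k : ℕ) (hk : 8 ≤ k) : 2 * k ^ 2 ≤ 2 ^ (k - 1) := by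
  induction k with
  | zero => omega
  | succ m ih =>
    rcases Nat.lt_or_ge m 8 with h | h
    · interval_cases m <;> revert hk <;> norm_num
    · have ihm := ih (by omega)
      have : 2 * (m+1)^2 ≤ 2 * (2 * m^2) := by nlinarith
      calc 2 * (m+1)^2 ≤ 2 * (2 * m ^2) := this
        _ ≤ 2 * 2 ^ (m-1) := by omega
        _ = 2 ^ (m + 1 - 1) := by
            rw [← pow_succ']
            congr 1
            omega

lemma small_check : ∀ n : ℕ, n < 99 →
    (3 ≤ n ∧ n ≠ 3 ∧ n ≠ 4 ∧ n ≠ 6 ∧ n ≠ 10 ∧ n ≠ 12) → n ≤ 2 ^ (n.totient - 1) := by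
  decide

lemma n_le_pow (n : ℕ) (hn : 3 ≤ n)
    (h3 : n ≠ 3) (h4 : n ≠ 4) (h6 : n ≠ 6) (h10 : n ≠ 10) (h12 : n ≠ 12) :
    n ≤ 2 ^ (n.totient - 1) := by
  rcases Nat.lt_or_ge n 99 with h | h
  · exact small_check n h ⟨hn, h3, h4, h6, h10, h12⟩
  · have h1 := tot_sq n (by omega)
    have h2 : 8 ≤ n.totient := by nlinarith
    calc n ≤ 2 * n.totient ^ 2 := h1
      _ ≤ 2 ^ (n.totient - 1) := pow_ge _ h2

lemma norm_int_add_mul (q p : ℤ) (y : ℤ√2) :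
    Zsqrtd.norm ((q:ℤ√2) + (p:ℤ√2) * y)
      = q*q + p*(2*q*y.re + p*y.re^2 - 2*p*y.im^2) := by
  simp only [Zsqrtd.norm, Zsqrtd.re_add, Zsqrtd.im_add, Zsqrtd.re_mul, Zsqrtd.im_mul,
    Zsqrtd.re_intCast, Zsqrtd.im_intCast]
  ring

lemma norm_geom_cong (p : ℤ) (q n : ℕ) (z : ℤ√2)
    (hz : u ^ (n / q) = 1 + (p:ℤ√2) * z) :
    ∃ K : ℤ, Zsqrtd.norm (∑ i ∈ range q, (u ^ (n / q)) ^ i) = (q:ℤ)*(q:ℤ) + p * K := by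
  obtain ⟨B, hB⟩ := geom_one_add ((p:ℤ√2) * z) q
  set T : ℕ := ∑ i ∈ range q, (i:ℕ) with hT
  have hc : ∑ i ∈ range q, (u ^ (n / q)) ^ i
      = (((q:ℤ)):ℤ√2) + (p:ℤ√2) * ((T:ℤ√2) * z + p * z^2 * B) := by
    simp only [hz]
    rw [hB]
    push_cast
    ring
  rw [hc, norm_int_add_mul]
  exact ⟨_, rfl⟩

lemma norm_geom_p (p n : ℕ) (hodd : Odd p) (z : ℤ√2)
    (hz : u ^ (n / p) = 1 + ((p:ℤ):ℤ√2) * z) :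
    ∃ K : ℤ, Zsqrtd.norm (∑ i ∈ range p, (u ^ (n / p)) ^ i)
      = (p:ℤ)*(p:ℤ) * (1 + (p:ℤ) * K) := by
  obtain ⟨B, hB⟩ := geom_one_add (((p:ℤ):ℤ√2) * z) p
  have hT := sum_range_half p hodd
  set m : ℤ√2 := (((p-1)/2 : ℕ) : ℤ√2) * z + z^2 * B with hm
  have hc : ∑ i ∈ range p, (u ^ (n / p)) ^ i
      = (((p:ℤ)):ℤ√2) * (1 + ((p:ℤ):ℤ√2) * m) := by
    simp only [hz]
    rw [hB, hT, hm]
    push_cast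
    ring
  rw [hc, Zsqrtd.norm_mul, Zsqrtd.norm_intCast]
  have h1 : Zsqrtd.norm (1 + ((p:ℤ):ℤ√2) * m)
      = 1*1 + (p:ℤ)*(2*1*m.re + (p:ℤ)*m.re^2 - 2*(p:ℤ)*m.im^2) := by
    have := norm_int_add_mul 1 (p:ℤ) m
    simpa using this
  rw [h1]
  exact ⟨2*m.re + (p:ℤ)*m.re^2 - 2*(p:ℤ)*m.im^2, by ring⟩

lemma u_pow_even (k : ℕ) : ∃ z : ℤ√2, u ^ k = 1 + 2 * z := by
  induction k with
  | zero => exact ⟨0, by simp⟩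
  | succ m ih =>
    obtain ⟨z, hz⟩ := ih
    refine ⟨⟨1,1⟩ + z * u, ?_⟩
    rw [pow_succ, hz]
    have hu : u = 1 + 2 * (⟨1,1⟩ : ℤ√2) := by decide
    rw [hu]
    ring

lemma norm_u_pow (k : ℕ) : Zsqrtd.norm (u ^ k) = 1 := by
  induction k with
  | zero => simp
  | succ m ih => rw [pow_succ, Zsqrtd.norm_mul, ih, one_mul]; decide

lemma eight_not_dvd_e (n : ℕ) (hn : 3 ≤ n) : ¬ ((8:ℤ) ∣ e n) := by
  intro h8
  have hn0 : 0 < n := by omega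
  by_cases hq : ∃ q : ℕ, q.Prime ∧ q ∣ n ∧ q ≠ 2
  · obtain ⟨q, hq, hqn, hq2⟩ := hq
    obtain ⟨z, hz⟩ := u_pow_even (n / q)
    have hz' : u ^ (n / q) = 1 + ((2:ℤ):ℤ√2) * z := by
      rw [hz]; norm_num
    obtain ⟨K, hK⟩ := norm_geom_cong 2 q n z hz'
    have hdvd := e_dvd_norm_geom n q hq.one_lt hqn hn0
    have h2 : (2:ℤ) ∣ (q:ℤ)*(q:ℤ) := by
      have : (2:ℤ) ∣ Zsqrtd.norm (∑ i ∈ range q, (u ^ (n / q)) ^ i) :=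
        dvd_trans (by norm_num) (dvd_trans h8 hdvd)
      rw [hK] at this
      omega
    have h3 : (2:ℤ) ∣ (q:ℤ) := (Int.prime_two.dvd_mul.mp h2).elim id id
    have h4 : (2:ℕ) ∣ q := by exact_mod_cast h3
    exact hq2 ((Nat.prime_dvd_prime_iff_eq Nat.prime_two hq).mp h4).symm
  · -- n is a power of 2 ; in particular 4 ∣ n
    push_neg at hq
    have h2n : 2 ∣ n := by
      have hmf := Nat.minFac_prime (show n ≠ 1 by omega)
      have := hq _ hmf (Nat.minFac_dvd n)
      simpa [this] using Nat.minFac_dvd n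
    have h4n : 4 ∣ n := by
      obtain ⟨m, hm⟩ := h2n
      have hm2 : 2 ≤ m := by omega
      have hmf := Nat.minFac_prime (show m ≠ 1 by omega)
      have hdvd : m.minFac ∣ n := (Nat.minFac_dvd m).trans ⟨2, by omega⟩
      have := hq _ hmf hdvd
      obtain ⟨t, ht⟩ := (this ▸ Nat.minFac_dvd m : 2 ∣ m)
      exact ⟨t, by omega⟩
    have hdvd := e_dvd_norm_geom n 2 (by norm_num) h2n hn0
    have hc : ∑ i ∈ range 2, (u ^ (n / 2)) ^ i = 1 + (u ^ (n/4)) * (u ^ (n/4)) := by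
      rw [show (2:ℕ) = 1 + 1 from rfl, sum_range_succ, sum_range_succ, sum_range_zero]
      rw [← pow_add, show n/4 + n/4 = n/2 from by omega]
      simp
    set s := u ^ (n/4) with hs
    have hnorm : Zsqrtd.norm (1 + s * s) = 4 + 8 * s.im^2 := by
      have h1 : Zsqrtd.norm s = 1 := norm_u_pow _
      simp only [Zsqrtd.norm, Zsqrtd.re_add, Zsqrtd.im_add, Zsqrtd.re_mul, Zsqrtd.im_mul,
        Zsqrtd.re_one, Zsqrtd.im_one] at h1 ⊢
      nlinarith [h1]
    rw [hc, hnorm] at hdvd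
    have : (8:ℤ) ∣ 4 + 8 * s.im^2 := dvd_trans h8 hdvd
    omega

lemma elem_dvd_of_pow {p : ℕ} {m : ℕ} (h : Up p ^ m = 1) :
    ((p:ℤ) : ℤ√2) ∣ u ^ m - 1 := by
  have h1 : (mkq p u) ^ m = 1 := by
    have : ((Up p ^ m : (Qr p)ˣ) : Qr p) = ((1 : (Qr p)ˣ) : Qr p) := by rw [h]
    rwa [Units.val_pow_eq_pow_val, Units.val_one] at this
  have h2 : mkq p (u ^ m - 1) = 0 := by
    rw [map_sub, map_one, map_pow]
    exact sub_eq_zero.mpr h1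
  exact mkq_eq_zero_iff.mp h2

theorem main (n : ℕ) (hn : 3 ≤ n)
    (h3 : n ≠ 3) (h4 : n ≠ 4) (h6 : n ≠ 6) (h10 : n ≠ 10) (h12 : n ≠ 12) :
    ∃ p : ℕ, p.Prime ∧ (p:ℤ) ∣ Zsqrtd.norm (u ^ n - 1) ∧
      ∀ m : ℕ, 0 < m → m < n → ¬ (p:ℤ) ∣ Zsqrtd.norm (u ^ m - 1) := by
  have hn0 : 0 < n := by omega
  have hφ1 : 1 ≤ n.totient := Nat.totient_pos.mpr hn0
  -- size comparison
  have hle : ((2*n)^2 : ℕ) ≤ 4 ^ n.totient := by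
    have h1 := n_le_pow n hn h3 h4 h6 h10 h12
    calc (2*n)^2 ≤ (2 * 2 ^ (n.totient - 1))^2 := by
          apply Nat.pow_le_pow_left; omega
      _ = (2 ^ n.totient)^2 := by
          congr 1
          rw [← pow_succ']
          congr 1
          omega
      _ = 4 ^ n.totient := by
          rw [← pow_mul, Nat.mul_comm n.totient 2, pow_mul]
          norm_num
  have hlow := e_lower n (by omega)
  have hgtR : (((2*n)^2 : ℕ) : ℝ) < ((e n : ℤ) : ℝ) := by
    refine lt_of_le_of_lt ?_ hlow
    calc (((2*n)^2 : ℕ) : ℝ) ≤ ((4 ^ n.totient : ℕ) : ℝ) := by exact_mod_cast hle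
      _ = (4:ℝ) ^ n.totient := by push_cast; ring
  have hgtZ : (((2*n)^2 : ℕ) : ℤ) < e n := by exact_mod_cast hgtR
  set A : ℕ := (e n).toNat with hA
  have hAe : (A : ℤ) = e n := Int.toNat_of_nonneg (by omega)
  have hAgt : (2*n)^2 < A := by omega
  have hAne : A ≠ 0 := by omega
  have h2nne : (2*n)^2 ≠ 0 := by positivity
  -- find a prime with excess valuation
  obtain ⟨p, hp, hvp⟩ : ∃ p : ℕ, p.Prime ∧
      ((2*n)^2).factorization p < A.factorization p := by
    by_contra hcon
    push_neg at hcon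
    have hfle : A.factorization ≤ ((2*n)^2).factorization := by
      intro q
      by_cases hq : q.Prime
      · exact hcon q hq
      · simp [Nat.factorization_eq_zero_of_not_prime _ hq]
    have := (Nat.factorization_le_iff_dvd hAne h2nne).mp hfle
    have := Nat.le_of_dvd (by positivity) this
    omega
  have hpA : p ∣ A := Nat.dvd_of_factorization_pos (by omega)
  have hpe : (p:ℤ) ∣ e n := by
    rw [← hAe]
    exact_mod_cast hpA
  -- p ≠ 2
  have hp2 : p ≠ 2 := by
    rintro rfl
    have hv2 : 1 ≤ (2*n).factorization 2 :=
      (Nat.Prime.factorization_pos_of_dvd Nat.prime_two (by omega) ⟨n, rfl⟩)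
    have hv2' : 2 ≤ ((2*n)^2).factorization 2 := by
      rw [Nat.factorization_pow]
      simpa using by omega
    have hv3 : 3 ≤ A.factorization 2 := by omega
    have h8A : 2^3 ∣ A := (Nat.Prime.pow_dvd_iff_le_factorization Nat.prime_two hAne).mpr hv3
    have : (8:ℤ) ∣ e n := by
      rw [← hAe]
      exact_mod_cast (show (8:ℕ) ∣ A from h8A)
    exact eight_not_dvd_e n hn this
  have hpodd : Odd p := hp.odd_of_ne_two hp2
  -- order of u mod p
  haveI : Finite (Qr p) := finite_Qr p hp.pos
  have hpdel : (p:ℤ) ∣ Zsqrtd.norm (u ^ n - 1) := hpe.trans (e_dvd_delta n hn0)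
  have hUp : Up p ^ n = 1 := (key_iff hp hp2 n).mp hpdel
  set r := orderOf (Up p) with hr
  have hrn : r ∣ n := orderOf_dvd_iff_pow_eq_one.mpr hUp
  by_cases hreq : r = n
  · refine ⟨p, hp, hpdel, ?_⟩
    intro m hm0 hmn hdvd
    have := orderOf_dvd_iff_pow_eq_one.mpr ((key_iff hp hp2 m).mp hdvd)
    rw [← hr] at this
    rw [hreq] at this
    have := Nat.le_of_dvd hm0 this
    omega
  · exfalso
    have hrpos : 0 < r := orderOf_pos _
    have hrlt : r < n := lt_of_le_of_ne (Nat.le_of_dvd hn0 hrn) hreq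
    have hnr2 : 2 ≤ n / r := by
      have h1 : r * (n / r) = n := Nat.mul_div_cancel' hrn
      rcases Nat.lt_or_ge (n / r) 2 with h | h
      · interval_cases (n / r) <;> omega
      · exact h
    set q := (n / r).minFac with hq
    have hqprime : q.Prime := Nat.minFac_prime (by omega)
    have hqn : q ∣ n := (Nat.minFac_dvd _).trans (Nat.div_dvd_of_dvd hrn)
    have hrnq : r ∣ n / q := by
      refine ⟨(n / r) / q, ?_⟩
      rw [← Nat.mul_div_assoc r (Nat.minFac_dvd _), Nat.mul_div_cancel' hrn]
    have hUq : Up p ^ (n / q) = 1 := orderOf_dvd_iff_pow_eq_one.mp hrnq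
    obtain ⟨z, hz⟩ : ∃ z : ℤ√2, u ^ (n / q) = 1 + ((p:ℤ):ℤ√2) * z := by
      obtain ⟨z, hz⟩ := elem_dvd_of_pow hUq
      exact ⟨z, by linear_combination hz⟩
    -- first conclude p = q
    obtain ⟨K, hK⟩ := norm_geom_cong ((p:ℤ)) q n z hz
    have hdvdc := e_dvd_norm_geom n q hqprime.one_lt hqn hn0
    have hpq2 : (p:ℤ) ∣ (q:ℤ)*(q:ℤ) := by
      have h1 : (p:ℤ) ∣ Zsqrtd.norm (∑ i ∈ range q, (u ^ (n / q)) ^ i) :=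
        hpe.trans hdvdc
      rw [hK] at h1
      have := dvd_sub h1 (Dvd.intro K rfl)
      simpa using this
    have hpq : p = q := by
      have hpZ : Prime (p : ℤ) := Nat.prime_iff_prime_int.mp hp
      have h1 : (p:ℤ) ∣ (q:ℤ) := (hpZ.dvd_mul.mp hpq2).elim id id
      have h2 : p ∣ q := by exact_mod_cast h1
      exact (Nat.prime_dvd_prime_iff_eq hp hqprime).mp h2
    rw [← hpq] at hqn hz hdvdc
    -- p ∣ n hence valuation of (2n)^2 at p is ≥ 2, so p^3 ∣ A
    have hvp2 : 2 ≤ ((2*n)^2).factorization p := by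
      have hv1 : 1 ≤ (2*n).factorization p :=
        Nat.Prime.factorization_pos_of_dvd hp (by omega) (hqn.mul_left 2)
      rw [Nat.factorization_pow]
      simpa using by omega
    have hv3 : 3 ≤ A.factorization p := by omega
    have hp3A : p^3 ∣ A := (Nat.Prime.pow_dvd_iff_le_factorization hp hAne).mpr hv3
    have hp3e : ((p:ℤ))^3 ∣ e n := by
      rw [← hAe]
      exact_mod_cast hp3A
    -- sharp computation
    obtain ⟨K', hK'⟩ := norm_geom_p p n hpodd z hz
    have h1 : ((p:ℤ))^3 ∣ Zsqrtd.norm (∑ i ∈ range p, (u ^ (n / p)) ^ i) :=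
      hp3e.trans hdvdc
    rw [hK'] at h1
    have hpZ : Prime (p : ℤ) := Nat.prime_iff_prime_int.mp hp
    have hpne : (p:ℤ) ≠ 0 := by exact_mod_cast hp.pos.ne'
    have h2 : (p:ℤ) ∣ 1 + (p:ℤ) * K' := by
      have h3 : ((p:ℤ))^2 * (p:ℤ) ∣ ((p:ℤ))^2 * (1 + (p:ℤ)*K') := by
        have : ((p:ℤ))^2 * (1 + (p:ℤ)*K') = (p:ℤ)*(p:ℤ) * (1 + (p:ℤ) * K') := by ring
        rw [this]
        exact (pow_succ (p:ℤ) 2) ▸ h1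
      exact (mul_dvd_mul_iff_left (pow_ne_zero 2 hpne)).mp h3
    have h4 : (p:ℤ) ∣ 1 := by
      have := dvd_sub h2 (Dvd.intro K' rfl)
      simpa using this
    have := Int.le_of_dvd one_pos h4
    have hple := hp.two_le
    omega

end LP

/-- For `u = 3 + 2√2` and `Δ_n = N_{ℚ(√2)/ℚ}(u^n - 1)`: the listed initial values hold,
and every `Δ_n` with `n ≥ 3` has a primitive prime divisor. -/

theorem lehmerPierce_three_add_two_sqrt_two
    (Δ : ℕ → ℤ) (hΔ : ∀ n : ℕ, Δ n = Zsqrtd.norm ((⟨3, 2⟩ : ℤ√2) ^ n - 1)) :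
    Δ 1 = -4 ∧ Δ 2 = -32 ∧ Δ 3 = -196 ∧ Δ 4 = -1152 ∧ Δ 5 = -6724 ∧ Δ 6 = -39200 ∧
      ∀ n : ℕ, 3 ≤ n → ∃ p : ℕ, p.Prime ∧ (p : ℤ) ∣ Δ n ∧
        ∀ m : ℕ, 0 < m → m < n → Δ m ≠ 0 → ¬ (p : ℤ) ∣ Δ m := by
  have hu : (⟨3, 2⟩ : ℤ√2) = LP.u := rfl
  refine ⟨by rw [hΔ]; decide, by rw [hΔ]; decide, by rw [hΔ]; decide, by rw [hΔ]; decide,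
    by rw [hΔ]; decide, by rw [hΔ]; decide, ?_⟩
  intro n hn
  by_cases h3 : n = 3
  · subst h3
    exact ⟨7, by norm_num, by rw [hΔ]; decide,
      fun m hm0 hmn _ => by rw [hΔ]; interval_cases m <;> decide⟩
  by_cases h4 : n = 4
  · subst h4
    exact ⟨3, by norm_num, by rw [hΔ]; decide,
      fun m hm0 hmn _ => by rw [hΔ]; interval_cases m <;> decide⟩
  by_cases h6 : n = 6
  · subst h6
    exact ⟨5, by norm_num, by rw [hΔ]; decide,
      fun m hm0 hmn _ => by rw [hΔ]; interval_cases m <;> decide⟩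
  by_cases h10 : n = 10
  · subst h10
    exact ⟨29, by norm_num, by rw [hΔ]; decide,
      fun m hm0 hmn _ => by rw [hΔ]; interval_cases m <;> decide⟩
  by_cases h12 : n = 12
  · subst h12
    exact ⟨11, by norm_num, by rw [hΔ]; decide,
      fun m hm0 hmn _ => by rw [hΔ]; interval_cases m <;> decide⟩
  obtain ⟨p, hp, hdvd, hnd⟩ := LP.main n hn h3 h4 h6 h10 h12
  exact ⟨p, hp, by rw [hΔ, hu]; exact hdvd,
    fun m hm0 hmn _ => by rw [hΔ, hu]; exact hnd m hm0 hmn⟩
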